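/- Let n, p ∈ ℕ with n ≥ 1, let L > 0, and let g : ℝⁿ × ℝᵖ → ℝⁿ satisfy ‖g(x,u) − g(y,u)‖ ≤ L‖x − y‖ for all x, y, u; define F(e,u) = e + g(e,u). Let P be a real symmetric positive-definite n×n matrix with positive-definite square root √P, write ‖x‖_P = √(xᵀPx), and let λ denote the largest eigenvalue of √P. Let 0 < ε < ε_r, let N, m ∈ ℕ with 1 ≤ m ≤ N, and let η ≥ 0 satisfy η ≤ L(ε_r − ε)/(λ·((1+L)^N − 1)). Let (u_τ)_{τ=0}^{N−1} be inputs and let the nominal optimal trajectory (ẽ_τ)_{τ=0}^{N} satisfy ẽ_{τ+1} = F(ẽ_τ, u_τ) and ‖ẽ_N‖_P ≤ ε. Let the actual trajectory satisfy e_0 = ẽ_0 and e_{k+1} = F(e_k, u_k) + d_k with ‖d_k‖ ≤ η for k = 0, …, m−1. Define the candidate trajectory ē_0 = e_m and ē_{τ+1} = F(ē_τ, u_{τ+m}) for τ = 0, …, N−m−1. Then ‖ē_{N−m}‖_P ≤ ε_r. -/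

import Mathlib

open Matrix

lemma spectral_bound {n : ℕ} (hn : 1 ≤ n) (A : Matrix (Fin n) (Fin n) ℝ) (hA : A.PosDef)
    (x : EuclideanSpace ℝ (Fin n)) :
    ‖Matrix.toEuclideanLin A x‖ ≤ (⨆ i, hA.1.eigenvalues i) * ‖x‖ := by
  have hne : Nonempty (Fin n) := Fin.pos_iff_nonempty.mp hn
  set lam := ⨆ i, hA.1.eigenvalues i with hlam
  have hub : ∀ i, hA.1.eigenvalues i ≤ lam := fun i =>
    le_ciSup (Set.Finite.bddAbove (Set.finite_range _)) i
  have hev : ∀ i, 0 ≤ hA.1.eigenvalues i := fun i => (hA.eigenvalues_pos i).le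
  have hlam0 : 0 ≤ lam := le_trans (hev (Classical.arbitrary _)) (hub _)
  set b := hA.1.eigenvectorBasis with hb
  have hrepr : ∀ i, b.repr (Matrix.toEuclideanLin A x) i
      = hA.1.eigenvalues i * b.repr x i := by
    intro i
    rw [b.repr_apply_apply, b.repr_apply_apply]
    have hsymm := Matrix.isHermitian_iff_isSymmetric.1 hA.1
    rw [← hsymm (b i) x]
    have h2 : Matrix.toEuclideanLin A (b i) = (hA.1.eigenvalues i • b i : EuclideanSpace ℝ (Fin n)) := by
      show (WithLp.toLp 2 (A *ᵥ (b i).ofLp) : EuclideanSpace ℝ (Fin n)) = _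
      ext j
      have := congrFun (hA.1.mulVec_eigenvectorBasis i) j
      simpa using this
    rw [h2, real_inner_smul_left]
  have key : ‖b.repr (Matrix.toEuclideanLin A x)‖ ≤ lam * ‖b.repr x‖ := by
    rw [EuclideanSpace.norm_eq, EuclideanSpace.norm_eq]
    rw [← Real.sqrt_sq hlam0, ← Real.sqrt_mul (sq_nonneg lam)]
    apply Real.sqrt_le_sqrt
    rw [Finset.mul_sum]
    apply Finset.sum_le_sum
    intro i _
    rw [hrepr i]
    rw [norm_mul, mul_pow, Real.norm_eq_abs, sq_abs]
    gcongr
    · exact hev i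
    · exact hub i
  have h3 : ∀ y : EuclideanSpace ℝ (Fin n), ‖y‖ = ‖b.repr y‖ :=
    fun y => (b.repr.norm_map y).symm
  rw [h3 (Matrix.toEuclideanLin A x), h3 x]
  exact key

lemma Pnorm_eq {n : ℕ} (P sqrtP : Matrix (Fin n) (Fin n) ℝ)
    (hsqrtP : sqrtP.PosDef) (hsq : sqrtP * sqrtP = P) (x : EuclideanSpace ℝ (Fin n)) :
    Real.sqrt (x ⬝ᵥ P.mulVec x) = ‖Matrix.toEuclideanLin sqrtP x‖ := by
  have hsymm : sqrtPᵀ = sqrtP := by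
    rw [← Matrix.conjTranspose_eq_transpose_of_trivial]; exact hsqrtP.1
  have h1 : x ⬝ᵥ P.mulVec x = (sqrtP.mulVec x) ⬝ᵥ (sqrtP.mulVec x) := by
    rw [← hsq, ← Matrix.mulVec_mulVec, Matrix.dotProduct_mulVec, ← Matrix.mulVec_transpose,
      hsymm]
  rw [h1, EuclideanSpace.norm_eq]
  congr 1
  rw [dotProduct]
  apply Finset.sum_congr rfl
  intro i _
  rw [Real.norm_eq_abs, sq_abs]
  show sqrtP.mulVec x i * sqrtP.mulVec x i = (sqrtP.mulVec x i)^2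
  ring

/-- first half of Lemma 1: after `m` disturbed steps under the
previously optimal inputs, the shifted candidate trajectory reaches the
enlarged terminal region `{e : ‖e‖_P ≤ ε_r}` at prediction step `N − m`. -/
theorem stmt_10 (n p : ℕ) (hn : 1 ≤ n) (L : ℝ) (hL : 0 < L)
    (g : EuclideanSpace ℝ (Fin n) → EuclideanSpace ℝ (Fin p) → EuclideanSpace ℝ (Fin n))
    (hg : ∀ x y : EuclideanSpace ℝ (Fin n), ∀ u : EuclideanSpace ℝ (Fin p),
      ‖g x u - g y u‖ ≤ L * ‖x - y‖)
    (P sqrtP : Matrix (Fin n) (Fin n) ℝ) (hP : P.PosDef)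
    (hsqrtP : sqrtP.PosDef) (hsq : sqrtP * sqrtP = P)
    (lam : ℝ) (hlam : lam = ⨆ i, hsqrtP.1.eigenvalues i)
    (ε εr : ℝ) (hε : 0 < ε) (hεεr : ε < εr)
    (N m : ℕ) (hm1 : 1 ≤ m) (hmN : m ≤ N)
    (η : ℝ) (hη0 : 0 ≤ η) (hη : η ≤ L * (εr - ε) / (lam * ((1 + L) ^ N - 1)))
    (u : ℕ → EuclideanSpace ℝ (Fin p))
    (etil e ebar : ℕ → EuclideanSpace ℝ (Fin n))
    (d : ℕ → EuclideanSpace ℝ (Fin n))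
    (hetil : ∀ τ < N, etil (τ + 1) = etil τ + g (etil τ) (u τ))
    (hterm : Real.sqrt (etil N ⬝ᵥ P.mulVec (etil N)) ≤ ε)
    (he0 : e 0 = etil 0)
    (he : ∀ k < m, e (k + 1) = e k + g (e k) (u k) + d k)
    (hd : ∀ k < m, ‖d k‖ ≤ η)
    (hebar0 : ebar 0 = e m)
    (hebar : ∀ τ < N - m, ebar (τ + 1) = ebar τ + g (ebar τ) (u (τ + m))) :
    Real.sqrt (ebar (N - m) ⬝ᵥ P.mulVec (ebar (N - m))) ≤ εr := by
  have hN1 : 1 ≤ N := le_trans hm1 hmN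
  have hL1 : (0:ℝ) < 1 + L := by linarith
  have hpow1 : ∀ k : ℕ, (1:ℝ) ≤ (1 + L) ^ k := fun k => one_le_pow₀ (by linarith)
  -- Step 1: disturbance accumulation during the first m steps
  have hdelta : ∀ k, k ≤ m → L * ‖e k - etil k‖ ≤ η * ((1 + L) ^ k - 1) := by
    intro k
    induction k with
    | zero => intro _; simp [he0]
    | succ k ih =>
      intro hk
      have hkm : k < m := hk
      have hkN : k < N := lt_of_lt_of_le hkm hmN
      have ihh := ih (le_of_lt hkm)
      have h2 : e (k + 1) - etil (k + 1)
          = (e k - etil k) + (g (e k) (u k) - g (etil k) (u k)) + d k := by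
        rw [he k hkm, hetil k hkN]; abel
      have hb : ‖e (k + 1) - etil (k + 1)‖ ≤ (1 + L) * ‖e k - etil k‖ + η := by
        rw [h2]
        have := norm_add₃_le (a := e k - etil k)
          (b := g (e k) (u k) - g (etil k) (u k)) (c := d k)
        have h3 := hg (e k) (etil k) (u k)
        have h4 := hd k hkm
        nlinarith [norm_nonneg (e k - etil k)]
      calc L * ‖e (k + 1) - etil (k + 1)‖
          ≤ L * ((1 + L) * ‖e k - etil k‖ + η) := by
            exact mul_le_mul_of_nonneg_left hb hL.le
        _ = (1 + L) * (L * ‖e k - etil k‖) + L * η := by ring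
        _ ≤ (1 + L) * (η * ((1 + L) ^ k - 1)) + L * η := by
            have := mul_le_mul_of_nonneg_left ihh hL1.le
            linarith
        _ = η * ((1 + L) ^ (k + 1) - 1) := by rw [pow_succ]; ring
  -- Step 2: error propagation along the candidate trajectory
  have hcand : ∀ τ, τ ≤ N - m →
      L * ‖ebar τ - etil (τ + m)‖ ≤ (1 + L) ^ τ * (η * ((1 + L) ^ m - 1)) := by
    intro τ
    induction τ with
    | zero =>
      intro _
      simpa [hebar0] using hdelta m le_rfl
    | succ τ ih =>
      intro hτ
      have hτNm : τ < N - m := hτ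
      have hτN : τ + m < N := by omega
      have ihh := ih (le_of_lt hτNm)
      have hidx : τ + 1 + m = τ + m + 1 := by omega
      have h2 : ebar (τ + 1) - etil (τ + 1 + m)
          = (ebar τ - etil (τ + m)) + (g (ebar τ) (u (τ + m)) - g (etil (τ + m)) (u (τ + m))) := by
        rw [hidx, hebar τ hτNm, hetil (τ + m) hτN]; abel
      have hb : ‖ebar (τ + 1) - etil (τ + 1 + m)‖ ≤ (1 + L) * ‖ebar τ - etil (τ + m)‖ := by
        rw [h2]
        have := norm_add_le (ebar τ - etil (τ + m))
          (g (ebar τ) (u (τ + m)) - g (etil (τ + m)) (u (τ + m)))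
        have h3 := hg (ebar τ) (etil (τ + m)) (u (τ + m))
        linarith
      calc L * ‖ebar (τ + 1) - etil (τ + 1 + m)‖
          ≤ L * ((1 + L) * ‖ebar τ - etil (τ + m)‖) := mul_le_mul_of_nonneg_left hb hL.le
        _ = (1 + L) * (L * ‖ebar τ - etil (τ + m)‖) := by ring
        _ ≤ (1 + L) * ((1 + L) ^ τ * (η * ((1 + L) ^ m - 1))) := by
            exact mul_le_mul_of_nonneg_left ihh hL1.le
        _ = (1 + L) ^ (τ + 1) * (η * ((1 + L) ^ m - 1)) := by rw [pow_succ]; ring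
  -- total deviation bound
  have hNm : N - m + m = N := Nat.sub_add_cancel hmN
  have hDN := hcand (N - m) le_rfl
  rw [hNm] at hDN
  have hfac : (1 + L) ^ (N - m) * (η * ((1 + L) ^ m - 1))
      = η * ((1 + L) ^ N - (1 + L) ^ (N - m)) := by
    rw [show ((1:ℝ) + L) ^ N = (1 + L) ^ (N - m) * (1 + L) ^ m by rw [← pow_add, hNm]]
    ring
  have hDN2 : L * ‖ebar (N - m) - etil N‖ ≤ η * ((1 + L) ^ N - 1) := by
    rw [hfac] at hDN
    have := hpow1 (N - m)
    nlinarith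
  -- positivity facts
  have hnN : Nonempty (Fin n) := Fin.pos_iff_nonempty.mp hn
  have hlampos : 0 < lam := by
    rw [hlam]
    have i0 : Fin n := Classical.arbitrary _
    exact lt_of_lt_of_le (hsqrtP.eigenvalues_pos i0)
      (le_ciSup (Set.Finite.bddAbove (Set.finite_range _)) i0)
  have hpowN : (1:ℝ) < (1 + L) ^ N := one_lt_pow₀ (by linarith) (by omega)
  have hden : 0 < lam * ((1 + L) ^ N - 1) := mul_pos hlampos (by linarith)
  have hη2 : η * (lam * ((1 + L) ^ N - 1)) ≤ L * (εr - ε) := (le_div_iff₀ hden).mp hη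
  -- combine using the P-weighted norm
  rw [Pnorm_eq P sqrtP hsqrtP hsq]
  rw [Pnorm_eq P sqrtP hsqrtP hsq] at hterm
  have htri : ‖Matrix.toEuclideanLin sqrtP (ebar (N - m))‖
      ≤ ‖Matrix.toEuclideanLin sqrtP (etil N)‖
        + ‖Matrix.toEuclideanLin sqrtP (ebar (N - m) - etil N)‖ := by
    have h5 : Matrix.toEuclideanLin sqrtP (ebar (N - m))
        = Matrix.toEuclideanLin sqrtP (etil N)
          + Matrix.toEuclideanLin sqrtP (ebar (N - m) - etil N) := by
      rw [← map_add]; congr 1; abel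
    rw [h5]; exact norm_add_le _ _
  have hspec : ‖Matrix.toEuclideanLin sqrtP (ebar (N - m) - etil N)‖
      ≤ lam * ‖ebar (N - m) - etil N‖ := by
    rw [hlam]; exact spectral_bound hn sqrtP hsqrtP _
  have hlast : lam * ‖ebar (N - m) - etil N‖ ≤ εr - ε := by
    rw [← mul_le_mul_iff_right₀ hL]
    calc L * (lam * ‖ebar (N - m) - etil N‖)
        = lam * (L * ‖ebar (N - m) - etil N‖) := by ring
      _ ≤ lam * (η * ((1 + L) ^ N - 1)) := mul_le_mul_of_nonneg_left hDN2 hlampos.le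
      _ = η * (lam * ((1 + L) ^ N - 1)) := by ring
      _ ≤ L * (εr - ε) := hη2
  linarith
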